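/- Let γ > 0, set σ := 1/2 + π/(4γ), and let A be a real number with A² = 2σ(1 − 1/γ − σ). Define x(t) := σ + A·sin(πt/2) and y(t) := −2·(σ + 2A·(2·sin(πt/2) + π·cos(πt/2))/(4 + π²)). Then y is differentiable and for every t ∈ ℝ one has y'(t) = γ · ∫_{−3}^{−1} x(t+θ)(1 − x(t+θ)) dθ + y(t); i.e., (x, y) is an exact (4-periodic) solution of the coupled test problem. -/

import Mathlib

open Real MeasureTheory intervalIntegral

/-- With `σ = 1/2 + π/(4γ)`, `A² = 2σ(1 − 1/γ − σ)`,
`x(t) = σ + A sin(π t / 2)` and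
`y(t) = −2(σ + 2A(2 sin(π t/2) + π cos(π t/2))/(4 + π²))`, the function `y` is
differentiable with `y'(t) = γ ∫_{−3}^{−1} x(t+θ)(1 − x(t+θ)) dθ + y(t)`,
so that `(x, y)` is an exact periodic solution of the coupled test problem. -/
theorem stmt1 (γ : ℝ) (hγ : 0 < γ)
    (σ A : ℝ) (hσ : σ = 1/2 + π/(4*γ))
    (hA : A^2 = 2*σ*(1 - 1/γ - σ))
    (x y : ℝ → ℝ)
    (hx : ∀ t, x t = σ + A * Real.sin (π * t / 2))
    (hy : ∀ t, y t = -2 * (σ + 2*A*(2*Real.sin (π * t / 2) + π * Real.cos (π * t / 2))/(4 + π^2))) :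
    ∀ t : ℝ, HasDerivAt y
      (γ * (∫ θ in (-3 : ℝ)..(-1), x (t + θ) * (1 - x (t + θ))) + y t) t := by
  have hxf : x = fun s => σ + A * Real.sin (π * s / 2) := funext hx
  have hyf : y = fun s => -2 * (σ + 2*A*(2*Real.sin (π * s / 2) + π * Real.cos (π * s / 2))/(4 + π^2)) := funext hy
  subst hxf hyf
  intro t
  have hπ : (π:ℝ) ≠ 0 := Real.pi_ne_zero
  have hγ' : γ ≠ 0 := ne_of_gt hγ
  have hd : (4 + π^2) ≠ 0 := by positivity
  -- compute the integral
  set F : ℝ → ℝ := fun θ => σ*(1-σ)*θ - (2*A*(1-2*σ)/π) * Real.cos (π*(t+θ)/2)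
      - A^2*(θ/2 - Real.sin (π*(t+θ))/(2*π)) with hF
  have hFderiv : ∀ θ ∈ Set.uIcc (-3:ℝ) (-1),
      HasDerivAt F ((σ + A * Real.sin (π * (t+θ) / 2)) * (1 - (σ + A * Real.sin (π * (t+θ) / 2)))) θ := by
    intro θ _
    have hlin : HasDerivAt (fun s : ℝ => π * (t + s) / 2) (π/2) θ := by
      simpa using (((hasDerivAt_id θ).const_add t).const_mul π).div_const 2
    have hlin2 : HasDerivAt (fun s : ℝ => π * (t + s)) π θ := by
      simpa using ((hasDerivAt_id θ).const_add t).const_mul π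
    have hc : HasDerivAt (fun s : ℝ => Real.cos (π*(t+s)/2)) (-Real.sin (π*(t+θ)/2) * (π/2)) θ :=
      (Real.hasDerivAt_cos _).comp θ hlin
    have hs : HasDerivAt (fun s : ℝ => Real.sin (π*(t+s))) (Real.cos (π*(t+θ)) * π) θ :=
      (Real.hasDerivAt_sin _).comp θ hlin2
    have hFd : HasDerivAt F (σ*(1-σ) - (2*A*(1-2*σ)/π) * (-Real.sin (π*(t+θ)/2) * (π/2))
        - A^2*(1/2 - (Real.cos (π*(t+θ)) * π)/(2*π))) θ := by
      refine (show HasDerivAt F _ θ from (((hasDerivAt_id θ).const_mul (σ*(1-σ))).sub (hc.const_mul (2*A*(1-2*σ)/π))).sub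
        ((((hasDerivAt_id θ).div_const 2).sub (hs.div_const (2*π))).const_mul (A^2))).congr_deriv (by ring)
    convert hFd using 1
    have h2 : π*(t+θ) = 2*(π*(t+θ)/2) := by ring
    rw [h2, Real.cos_two_mul]
    have hsc := Real.sin_sq_add_cos_sq (π*(t+θ)/2)
    field_simp
    linear_combination (-2*A^2) * hsc
  have hcont : IntervalIntegrable (fun θ => (σ + A * Real.sin (π * (t+θ) / 2)) * (1 - (σ + A * Real.sin (π * (t+θ) / 2)))) volume (-3) (-1) := by
    apply Continuous.intervalIntegrable
    fun_prop
  have hint : (∫ θ in (-3:ℝ)..(-1), (σ + A * Real.sin (π * (t+θ) / 2)) * (1 - (σ + A * Real.sin (π * (t+θ) / 2)))) = F (-1) - F (-3) :=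
    intervalIntegral.integral_eq_sub_of_hasDerivAt hFderiv hcont
  -- trig simplifications
  have c1 : Real.cos (π*(t + -1)/2) = Real.sin (π*t/2) := by
    have : π*(t + -1)/2 = π*t/2 - π/2 := by ring
    rw [this, Real.cos_sub]; simp
  have c3 : Real.cos (π*(t + -3)/2) = -Real.sin (π*t/2) := by
    have : π*(t + -3)/2 = π*t/2 - π - π/2 := by ring
    rw [this, Real.cos_sub, Real.cos_sub, Real.sin_sub]; simp
  have s1 : Real.sin (π*(t + -1)) = -Real.sin (π*t) := by
    have : π*(t + -1) = π*t - π := by ring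
    rw [this, Real.sin_sub]; simp
  have s3 : Real.sin (π*(t + -3)) = -Real.sin (π*t) := by
    have : π*(t + -3) = (π*t - π) - 2*π := by ring
    rw [this, Real.sin_sub_two_pi, Real.sin_sub]; simp
  -- derivative of y
  have hlin : HasDerivAt (fun s : ℝ => π * s / 2) (π/2) t := by
    simpa using ((hasDerivAt_id t).const_mul π).div_const 2
  have hsin : HasDerivAt (fun s : ℝ => Real.sin (π * s / 2)) (Real.cos (π*t/2) * (π/2)) t :=
    (Real.hasDerivAt_sin _).comp t hlin
  have hcos : HasDerivAt (fun s : ℝ => Real.cos (π * s / 2)) (-Real.sin (π*t/2) * (π/2)) t :=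
    (Real.hasDerivAt_cos _).comp t hlin
  have hy' : HasDerivAt (fun s : ℝ => -2 * (σ + 2*A*(2*Real.sin (π * s / 2) + π * Real.cos (π * s / 2))/(4 + π^2)))
      (-2 * ((2*A*(2*(Real.cos (π*t/2) * (π/2)) + π * (-Real.sin (π*t/2) * (π/2))))/(4 + π^2))) t := by
    exact (((((hsin.const_mul 2).add (hcos.const_mul π)).const_mul (2*A)).div_const (4 + π^2)).const_add σ).const_mul (-2)
  convert hy' using 1
  rw [hint, hF]
  simp only [c1, c3, s1, s3]
  subst hσ
  have hA' : 8*γ^2*A^2 = (2*γ+π)*(2*γ-4-π) := by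
    have h8 : (8*γ:ℝ) ≠ 0 := by positivity
    apply mul_left_cancel₀ h8
    field_simp at hA
    linear_combination (2*γ) * hA
  field_simp
  linear_combination (-32*π - 8*π^3) * hA'
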